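/- Let V be a type, G a simple graph on V, and k a natural number. Suppose there exist S', T' : Finset V with |S'| = |T'| = 2k such that for all a ∈ S' and b ∈ T' with a ≠ b, a and b are adjacent in G. Then there exist disjoint S, T : Finset V with |S| = |T| = k such that every a ∈ S is adjacent in G to every b ∈ T. -/

import Mathlib

theorem biclique_from_augmented_double_cover {V : Type*} (G : SimpleGraph V) (k : ℕ)
    (S' T' : Finset V) (hS' : S'.card = 2 * k) (hT' : T'.card = 2 * k)
    (hadj : ∀ a ∈ S', ∀ b ∈ T', a ≠ b → G.Adj a b) :
    ∃ S T : Finset V, Disjoint S T ∧ S.card = k ∧ T.card = k ∧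
      ∀ a ∈ S, ∀ b ∈ T, G.Adj a b := by
  classical
  obtain ⟨S, hSsub, hScard⟩ := Finset.exists_subset_card_eq (s := S') (n := k) (by omega)
  have hTS : k ≤ (T' \ S).card := by
    have := Finset.le_card_sdiff S T'
    omega
  obtain ⟨T, hTsub, hTcard⟩ := Finset.exists_subset_card_eq (s := T' \ S) (n := k) hTS
  refine ⟨S, T, ?_, hScard, hTcard, ?_⟩
  · exact Finset.disjoint_left.mpr fun a ha hb => (Finset.mem_sdiff.mp (hTsub hb)).2 ha
  · intro a ha b hb
    have hbT' := Finset.mem_sdiff.mp (hTsub hb)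
    exact hadj a (hSsub ha) b hbT'.1 (fun h => hbT'.2 (h ▸ ha))
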